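/- Let K > 0, A ≠ 0, B ∈ ℝ, m ∈ ℝ, and let I be a nonempty open interval on which Ax + B > 0. Then the function f(x) = K·(Ax+B)^m (real power) satisfies Eq. (II) at every point of I if and only if m·(4m³ − 32m² + 79m − 60) = 0. -/

import Mathlib

/-- Eq. (II): `f'''' = f'·f'''/f + (11/10)·(f'')²/f − (12/5)·(f')²·f''/f² + (9/10)·(f')⁴/f³`. -/
def SatEqII (f : ℝ → ℝ) (x : ℝ) : Prop :=
  (deriv^[4] f x) =
    deriv f x * (deriv^[3] f x) / f x
      + (11/10) * (deriv^[2] f x)^2 / f x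
      - (12/5) * (deriv f x)^2 * (deriv^[2] f x) / (f x)^2
      + (9/10) * (deriv f x)^4 / (f x)^3

private lemma hasDerivAt_aux (C A B p x : ℝ) (h : A * x + B ≠ 0) :
    HasDerivAt (fun y => C * (A * y + B) ^ p)
      (C * (p * A * (A * x + B) ^ (p - 1))) x := by
  have h1 : HasDerivAt (fun y : ℝ => A * y + B) A x := by
    simpa using ((hasDerivAt_id x).const_mul A).add_const B
  have h2 := (Real.hasDerivAt_rpow_const (x := A * x + B) (p := p) (Or.inl h)).comp x h1
  have h3 := h2.const_mul C
  rw [show C * (p * A * (A * x + B) ^ (p - 1)) = C * (p * (A * x + B) ^ (p - 1) * A) by ring]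
  exact h3

private lemma iter_deriv_aux (K A B m : ℝ) :
    ∀ (k : ℕ) (x : ℝ), 0 < A * x + B →
      deriv^[k] (fun y => K * (A * y + B) ^ m) x
        = K * A ^ k * (∏ i ∈ Finset.range k, (m - i)) * (A * x + B) ^ (m - k) := by
  intro k
  induction k with
  | zero => intro x hx; simp
  | succ k ih =>
    intro x hx
    have hS : IsOpen {y : ℝ | 0 < A * y + B} :=
      isOpen_lt continuous_const (by continuity)
    have hmem : {y : ℝ | 0 < A * y + B} ∈ nhds x := hS.mem_nhds hx
    have heq : deriv^[k + 1] (fun y => K * (A * y + B) ^ m) x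
        = deriv (fun y => K * A ^ k * (∏ i ∈ Finset.range k, (m - i))
            * (A * y + B) ^ (m - k)) x := by
      rw [Function.iterate_succ_apply']
      apply Filter.EventuallyEq.deriv_eq
      filter_upwards [hmem] with y hy
      exact ih y hy
    rw [heq, (hasDerivAt_aux _ A B _ x (ne_of_gt hx)).deriv, Finset.prod_range_succ]
    push_cast
    rw [show m - ((k : ℝ) + 1) = m - (k : ℝ) - 1 by ring]
    ring

/-- `f(x) = K·(Ax+B)^m` satisfies Eq. (II) on a nonempty open interval
where `Ax+B > 0` iff `m(4m³ − 32m² + 79m − 60) = 0`. -/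
theorem statement8
    (K A B m : ℝ) (hK : 0 < K) (hA : A ≠ 0)
    (I : Set ℝ) (hIopen : IsOpen I) (hIinterval : I.OrdConnected)
    (hIne : I.Nonempty) (hIpos : ∀ x ∈ I, 0 < A * x + B) :
    (∀ x ∈ I, SatEqII (fun y => K * (A * y + B) ^ m) x) ↔
      m * (4 * m^3 - 32 * m^2 + 79 * m - 60) = 0 := by
  have key : ∀ x ∈ I, (SatEqII (fun y => K * (A * y + B) ^ m) x ↔
      m * (4 * m^3 - 32 * m^2 + 79 * m - 60) = 0) := by
    intro x hx
    set f : ℝ → ℝ := fun y => K * (A * y + B) ^ m with hfdef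
    have ht : 0 < A * x + B := hIpos x hx
    set t : ℝ := A * x + B with htdef
    have ht' : t ≠ 0 := ne_of_gt ht
    set u : ℝ := t ^ m with hudef
    have hupos : 0 < u := Real.rpow_pos_of_pos ht m
    have hu : u ≠ 0 := ne_of_gt hupos
    have hK' : K ≠ 0 := ne_of_gt hK
    have hrw : ∀ k : ℕ, t ^ (m - (k : ℝ)) = u / t ^ k := by
      intro k
      rw [hudef, Real.rpow_sub ht, Real.rpow_natCast]
    have h0 : f x = K * u := by
      simp [hfdef, hudef, htdef]
    have hd : ∀ k : ℕ, deriv^[k] f x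
        = K * A ^ k * (∏ i ∈ Finset.range k, (m - i)) * (u / t ^ k) := by
      intro k
      rw [hfdef, iter_deriv_aux K A B m k x ht, ← htdef, hrw]
    have h1 : deriv f x = K * A * m * (u / t) := by
      have := hd 1
      rw [Function.iterate_one] at this
      rw [this]; norm_num
    have h2 : deriv^[2] f x = K * A ^ 2 * (m * (m - 1)) * (u / t ^ 2) := by
      rw [hd 2, Finset.prod_range_succ, Finset.prod_range_succ]; norm_num
    have h3 : deriv^[3] f x = K * A ^ 3 * (m * (m - 1) * (m - 2)) * (u / t ^ 3) := by
      rw [hd 3, Finset.prod_range_succ, Finset.prod_range_succ, Finset.prod_range_succ]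
      norm_num
    have h4 : deriv^[4] f x
        = K * A ^ 4 * (m * (m - 1) * (m - 2) * (m - 3)) * (u / t ^ 4) := by
      rw [hd 4, Finset.prod_range_succ, Finset.prod_range_succ, Finset.prod_range_succ,
        Finset.prod_range_succ]
      norm_num
    have hfac : deriv^[4] f x
        - (deriv f x * (deriv^[3] f x) / f x
          + (11/10) * (deriv^[2] f x)^2 / f x
          - (12/5) * (deriv f x)^2 * (deriv^[2] f x) / (f x)^2
          + (9/10) * (deriv f x)^4 / (f x)^3)
        = (K * A ^ 4 * u / (t ^ 4 * 10))
            * (m * (4 * m^3 - 32 * m^2 + 79 * m - 60)) := by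
      rw [h1, h2, h3, h4, h0]
      field_simp
      ring
    have hc : K * A ^ 4 * u / (t ^ 4 * 10) ≠ 0 := by
      apply div_ne_zero (mul_ne_zero (mul_ne_zero hK' (pow_ne_zero _ hA)) hu)
      positivity
    unfold SatEqII
    rw [← sub_eq_zero, hfac, mul_eq_zero]
    simp [hc]
  obtain ⟨x0, hx0⟩ := hIne
  constructor
  · intro h
    exact (key x0 hx0).mp (h x0 hx0)
  · intro h x hx
    exact (key x hx).mpr h
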